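/- Generalized Newton–MacLaurin inequality: Let λ ∈ Γ_k and let integers satisfy n ≥ k > l ≥ 0, n ≥ r > s ≥ 0, k ≥ r and l ≥ s. Then ((σ_k(λ)/C_n^k)/(σ_l(λ)/C_n^l))^{1/(k−l)} ≤ ((σ_r(λ)/C_n^r)/(σ_s(λ)/C_n^s))^{1/(r−s)}. -/

import Mathlib

open Polynomial Finset

/-- The `m`-th elementary symmetric function of `x ∈ ℝⁿ`. -/
noncomputable def esym (n m : ℕ) (x : Fin n → ℝ) : ℝ :=
  ∑ s ∈ Finset.univ.powersetCard m, ∏ i ∈ s, x i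

/-- The Gårding cone `Γ_k ⊂ ℝⁿ`. -/
def GardingCone (n k : ℕ) : Set (Fin n → ℝ) :=
  {x | ∀ i : ℕ, 1 ≤ i → i ≤ k → 0 < esym n i x}

lemma esym_zero' (n : ℕ) (x : Fin n → ℝ) : esym n 0 x = 1 := by
  simp [esym]

lemma splits_derivative' {p : ℝ[X]} (hp : p.Splits) :
    (derivative p).Splits := by
  rw [splits_iff_card_roots] at hp ⊢
  have h1 := p.card_roots_le_derivative
  have h2 := (derivative p).card_roots'
  have h3 := p.natDegree_derivative_le
  omega

lemma splits_iterate_derivative' (k : ℕ) {p : ℝ[X]} (hp : p.Splits) :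
    (derivative^[k] p).Splits := by
  induction k with
  | zero => simpa
  | succ k ih => rw [Function.iterate_succ_apply']; exact splits_derivative' ih

lemma splits_reverse' {p : ℝ[X]} (hp : p.Splits) :
    p.reverse.Splits := by
  by_cases h0 : p = 0
  · simp [h0]
  have key : ∀ s : Multiset ℝ,
      ((s.map fun a => X - C a).prod.reverse).Splits := by
    intro s
    induction s using Multiset.induction with
    | empty => rw [Multiset.map_zero, Multiset.prod_zero, show (1:ℝ[X]) = C 1 by simp, reverse_C]; exact Splits.C _
    | cons a s ih =>
        rw [Multiset.map_cons, Multiset.prod_cons, reverse_mul_of_domain]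
        exact Splits.mul (Splits.of_natDegree_le_one
          ((X - C a).reverse_natDegree_le.trans (by simp))) ih
  have hprod := hp.eq_prod_roots
  rw [hprod, reverse_mul_of_domain, reverse_C]
  exact Splits.mul (Splits.C _) (key _)

lemma quad_disc {q : ℝ[X]} (hq : q.Splits) (hdeg : q.natDegree ≤ 2) :
    4 * (q.coeff 2 * q.coeff 0) ≤ q.coeff 1 ^ 2 := by
  by_cases ha : q.coeff 2 = 0
  · rw [ha]; nlinarith [sq_nonneg (q.coeff 1)]
  have hd : q.natDegree = 2 := le_antisymm hdeg (le_natDegree_of_ne_zero ha)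
  have hq0 : q ≠ 0 := fun h => ha (by simp [h])
  have hdeg0 : q.degree ≠ 0 := by
    rw [degree_eq_natDegree hq0, hd]; decide
  obtain ⟨x, hx⟩ := hq.exists_eval_eq_zero hdeg0
  replace hx : q.eval x = 0 := hx
  have he : q.coeff 2 * x ^ 2 + q.coeff 1 * x + q.coeff 0 = 0 := by
    have h3 : q.natDegree < 3 := by omega
    have := (eval_eq_sum_range' h3 x).symm.trans hx
    rw [Finset.sum_range_succ, Finset.sum_range_succ, Finset.sum_range_one] at this
    linear_combination this
  have hdd : discrim (q.coeff 2) (q.coeff 1) (q.coeff 0) = (2 * q.coeff 2 * x + q.coeff 1) ^ 2 :=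
    (quadratic_eq_zero_iff_discrim_eq_sq ha x).mp (by linear_combination he)
  rw [discrim] at hdd
  nlinarith [sq_nonneg (2 * q.coeff 2 * x + q.coeff 1)]

open Nat in
lemma newton_raw {n m : ℕ} (hmn : m + 2 ≤ n) (lam : Fin n → ℝ) :
    esym n (m+2) lam * esym n m lam *
      (((m+2)! : ℝ) * (m ! : ℝ) * (((n-(m+2))! : ℝ) * ((n-m)! : ℝ)))
      ≤ esym n (m+1) lam ^ 2 * ((((m+1)! : ℝ) * ((n-(m+1))! : ℝ)) ^ 2) := by
  set P : ℝ[X] := ∏ i : Fin n, (X + C (lam i)) with hP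
  have hPc : ∀ j, j ≤ n → P.coeff j = esym n (n - j) lam := by
    intro j hj
    rw [hP, Finset.prod_X_add_C_coeff _ _ (by simpa using hj)]
    simp only [Finset.card_univ, Fintype.card_fin]
    rfl
  have hPdeg : P.natDegree = n := by
    rw [hP, natDegree_prod _ _ (fun i _ => X_add_C_ne_zero (lam i))]
    simp
  have hPsplits : P.Splits :=
    Splits.prod fun i _ => Splits.of_natDegree_le_one (by simp [natDegree_X_add_C])
  set D : ℝ[X] := derivative^[n - (m+2)] P with hD
  have hDsplits : D.Splits := splits_iterate_derivative' _ hPsplits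
  have hDcoeff : ∀ j, D.coeff j =
      ((j + (n - (m+2))).descFactorial (n - (m+2)) : ℝ) * P.coeff (j + (n - (m+2))) := by
    intro j
    rw [hD, coeff_iterate_derivative, nsmul_eq_mul]
  have hDtop : D.coeff (m+2) = (n.descFactorial (n - (m+2)) : ℝ) := by
    rw [hDcoeff, show m + 2 + (n - (m+2)) = n by omega, hPc n le_rfl, Nat.sub_self,
      esym_zero', mul_one]
  have hDdeg : D.natDegree = m + 2 := by
    refine le_antisymm ((P.natDegree_iterate_derivative _).trans (by omega)) ?_
    refine le_natDegree_of_ne_zero ?_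
    rw [hDtop]
    have : n.descFactorial (n - (m+2)) ≠ 0 := by
      simp [Nat.descFactorial_eq_zero_iff_lt]
    exact_mod_cast this
  set R : ℝ[X] := D.reverse with hR
  have hRsplits : R.Splits := splits_reverse' hDsplits
  have hRdeg : R.natDegree ≤ m + 2 := D.reverse_natDegree_le.trans hDdeg.le
  have hRcoeff : ∀ j, j ≤ m + 2 → R.coeff j = D.coeff (m + 2 - j) := by
    intro j hj
    rw [hR, coeff_reverse, hDdeg, revAt_le hj]
  set Q : ℝ[X] := derivative^[m] R with hQ
  have hQsplits : Q.Splits := splits_iterate_derivative' _ hRsplits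
  have hQdeg : Q.natDegree ≤ 2 := (R.natDegree_iterate_derivative _).trans (by omega)
  have hQcoeff : ∀ j, Q.coeff j =
      (((j + m).descFactorial m : ℕ) : ℝ) * R.coeff (j + m) := by
    intro j
    rw [hQ, coeff_iterate_derivative, nsmul_eq_mul]
  have hQ2 : Q.coeff 2 = ((m+2).descFactorial m : ℝ) *
      (((n - (m+2)).descFactorial (n - (m+2)) : ℝ) * esym n (m+2) lam) := by
    rw [hQcoeff, show 2 + m = m + 2 by omega, hRcoeff _ le_rfl,
      show m + 2 - (m + 2) = 0 by omega, hDcoeff, Nat.zero_add, hPc _ (by omega),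
      show n - (n - (m+2)) = m + 2 by omega]
  have hQ1 : Q.coeff 1 = ((m+1).descFactorial m : ℝ) *
      (((n - (m+1)).descFactorial (n - (m+2)) : ℝ) * esym n (m+1) lam) := by
    rw [hQcoeff, show 1 + m = m + 1 by omega, hRcoeff _ (by omega),
      show m + 2 - (m + 1) = 1 by omega, hDcoeff,
      show 1 + (n - (m+2)) = n - (m+1) by omega, hPc _ (by omega),
      show n - (n - (m+1)) = m + 1 by omega]
  have hQ0 : Q.coeff 0 = ((m).descFactorial m : ℝ) *
      (((n - m).descFactorial (n - (m+2)) : ℝ) * esym n m lam) := by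
    rw [hQcoeff, Nat.zero_add, hRcoeff _ (by omega),
      show m + 2 - m = 2 by omega, hDcoeff,
      show 2 + (n - (m+2)) = n - m by omega, hPc _ (by omega),
      show n - (n - m) = m by omega]
  have disc := quad_disc hQsplits hQdeg
  rw [hQ0, hQ1, hQ2] at disc
  have d1 : 2 * (m+2).descFactorial m = (m+2)! := by
    have h := Nat.factorial_mul_descFactorial (show m ≤ m + 2 by omega)
    rw [show m + 2 - m = 2 by omega, Nat.factorial_two] at h
    exact h
  have d2 : (n-(m+2)).descFactorial (n-(m+2)) = (n-(m+2))! := Nat.descFactorial_self _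
  have d3 : m.descFactorial m = m ! := Nat.descFactorial_self _
  have d4 : 2 * (n-m).descFactorial (n-(m+2)) = (n-m)! := by
    have h := Nat.factorial_mul_descFactorial (show n - (m+2) ≤ n - m by omega)
    rw [show n - m - (n - (m+2)) = 2 by omega, Nat.factorial_two] at h
    exact h
  have d5 : (m+1).descFactorial m = (m+1)! := by
    have h := Nat.factorial_mul_descFactorial (show m ≤ m + 1 by omega)
    rw [show m + 1 - m = 1 by omega, Nat.factorial_one, one_mul] at h
    exact h
  have d6 : (n-(m+1)).descFactorial (n-(m+2)) = (n-(m+1))! := by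
    have h := Nat.factorial_mul_descFactorial (show n - (m+2) ≤ n - (m+1) by omega)
    rw [show n - (m+1) - (n - (m+2)) = 1 by omega, Nat.factorial_one, one_mul] at h
    exact h
  refine le_trans (le_of_eq ?_) (le_trans disc (le_of_eq ?_))
  · rw [← d1, ← d4, ← d2, ← d3]
    push_cast
    ring
  · rw [d5, d6]
    ring

open Nat in
lemma newton_norm {n m : ℕ} (hmn : m + 2 ≤ n) (lam : Fin n → ℝ) :
    (esym n m lam / (n.choose m : ℝ)) * (esym n (m+2) lam / (n.choose (m+2) : ℝ))
      ≤ (esym n (m+1) lam / (n.choose (m+1) : ℝ)) ^ 2 := by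
  have c0 : (0:ℝ) < (n.choose m : ℝ) := by exact_mod_cast Nat.choose_pos (by omega)
  have c1 : (0:ℝ) < (n.choose (m+1) : ℝ) := by exact_mod_cast Nat.choose_pos (by omega)
  have c2 : (0:ℝ) < (n.choose (m+2) : ℝ) := by exact_mod_cast Nat.choose_pos (by omega)
  rw [_root_.div_mul_div_comm, _root_.div_pow, div_le_div_iff₀ (by positivity) (by positivity)]
  have e1 : (n.choose (m+1) : ℝ) * (((m+1)! : ℝ) * ((n-(m+1))! : ℝ)) = (n ! : ℝ) := by
    exact_mod_cast congrArg (Nat.cast (R := ℝ))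
      (by rw [← Nat.choose_mul_factorial_mul_factorial (show m + 1 ≤ n by omega)]; ring)
  have e2 : (n.choose m : ℝ) * ((m ! : ℝ) * ((n-m)! : ℝ)) = (n ! : ℝ) := by
    exact_mod_cast congrArg (Nat.cast (R := ℝ))
      (by rw [← Nat.choose_mul_factorial_mul_factorial (show m ≤ n by omega)]; ring)
  have e3 : (n.choose (m+2) : ℝ) * (((m+2)! : ℝ) * ((n-(m+2))! : ℝ)) = (n ! : ℝ) := by
    exact_mod_cast congrArg (Nat.cast (R := ℝ))
      (by rw [← Nat.choose_mul_factorial_mul_factorial (show m + 2 ≤ n by omega)]; ring)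
  have raw := newton_raw hmn lam
  have F_pos : (0:ℝ) < (((m+1)! : ℝ) * ((n-(m+1))! : ℝ)) ^ 2 := by positivity
  rw [← mul_le_mul_iff_of_pos_right F_pos]
  calc esym n m lam * esym n (m+2) lam * (n.choose (m+1):ℝ)^2 *
        (((m+1)! : ℝ) * ((n-(m+1))! : ℝ)) ^ 2
      = esym n m lam * esym n (m+2) lam *
          ((n.choose (m+1):ℝ) * (((m+1)! : ℝ) * ((n-(m+1))! : ℝ))) ^ 2 := by ring
    _ = esym n m lam * esym n (m+2) lam * ((n !:ℝ))^2 := by rw [e1]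
    _ = esym n m lam * esym n (m+2) lam *
          (((n.choose m : ℝ) * ((m ! : ℝ) * ((n-m)! : ℝ))) *
           ((n.choose (m+2) : ℝ) * (((m+2)! : ℝ) * ((n-(m+2))! : ℝ)))) := by
        rw [e2, e3]; ring
    _ = (esym n (m+2) lam * esym n m lam *
          (((m+2)! : ℝ) * (m ! : ℝ) * (((n-(m+2))! : ℝ) * ((n-m)! : ℝ)))) *
          ((n.choose m : ℝ) * (n.choose (m+2) : ℝ)) := by ring
    _ ≤ (esym n (m+1) lam ^ 2 * ((((m+1)! : ℝ) * ((n-(m+1))! : ℝ)) ^ 2)) *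
          ((n.choose m : ℝ) * (n.choose (m+2) : ℝ)) := by
        apply mul_le_mul_of_nonneg_right raw (by positivity)
    _ = esym n (m+1) lam ^ 2 * ((n.choose m : ℝ) * (n.choose (m+2):ℝ)) *
          (((m+1)! : ℝ) * ((n-(m+1))! : ℝ)) ^ 2 := by ring

lemma avg_left {a : ℕ → ℝ} {kk s l : ℕ}
    (hanti : ∀ i j, i ≤ j → j + 1 ≤ kk → a j ≤ a i)
    (hsl : s ≤ l) (hlk : l < kk) :
    (∑ i ∈ Finset.Ico l kk, a i) / ((kk - l : ℕ) : ℝ)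
      ≤ (∑ i ∈ Finset.Ico s kk, a i) / ((kk - s : ℕ) : ℝ) := by
  have hkl : (0:ℝ) < ((kk - l : ℕ) : ℝ) := by exact_mod_cast (by omega : 0 < kk - l)
  have hks : (0:ℝ) < ((kk - s : ℕ) : ℝ) := by exact_mod_cast (by omega : 0 < kk - s)
  rw [div_le_div_iff₀ hkl hks]
  have hsplit : (∑ i ∈ Finset.Ico s kk, a i)
      = (∑ i ∈ Finset.Ico s l, a i) + (∑ i ∈ Finset.Ico l kk, a i) :=
    (Finset.sum_Ico_consecutive _ hsl (by omega)).symm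
  have h1 : ∀ i ∈ Finset.Ico s l, (∑ j ∈ Finset.Ico l kk, a j) ≤ ((kk - l : ℕ) : ℝ) * a i := by
    intro i hi
    rw [Finset.mem_Ico] at hi
    have := Finset.sum_le_card_nsmul (Finset.Ico l kk) a (a i) (fun j hj => by
      rw [Finset.mem_Ico] at hj
      exact hanti i j (by omega) (by omega))
    rwa [Nat.card_Ico, nsmul_eq_mul] at this
  have h2 : ((l - s : ℕ) : ℝ) * (∑ i ∈ Finset.Ico l kk, a i)
      ≤ ((kk - l : ℕ) : ℝ) * (∑ i ∈ Finset.Ico s l, a i) := by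
    calc ((l - s : ℕ) : ℝ) * (∑ i ∈ Finset.Ico l kk, a i)
        = ∑ _i ∈ Finset.Ico s l, (∑ j ∈ Finset.Ico l kk, a j) := by
          rw [Finset.sum_const, Nat.card_Ico, nsmul_eq_mul]
      _ ≤ ∑ i ∈ Finset.Ico s l, ((kk - l : ℕ) : ℝ) * a i := Finset.sum_le_sum h1
      _ = ((kk - l : ℕ) : ℝ) * (∑ i ∈ Finset.Ico s l, a i) := by rw [← Finset.mul_sum]
  have hcast : ((kk - s : ℕ) : ℝ) = ((kk - l : ℕ) : ℝ) + ((l - s : ℕ) : ℝ) := by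
    exact_mod_cast congrArg (Nat.cast (R := ℝ)) (by omega : kk - s = (kk - l) + (l - s))
  rw [hsplit, hcast]
  nlinarith [h2]

lemma avg_right {a : ℕ → ℝ} {kk s r : ℕ}
    (hanti : ∀ i j, i ≤ j → j + 1 ≤ kk → a j ≤ a i)
    (hsr : s < r) (hrk : r ≤ kk) :
    (∑ i ∈ Finset.Ico s kk, a i) / ((kk - s : ℕ) : ℝ)
      ≤ (∑ i ∈ Finset.Ico s r, a i) / ((r - s : ℕ) : ℝ) := by
  have hks : (0:ℝ) < ((kk - s : ℕ) : ℝ) := by exact_mod_cast (by omega : 0 < kk - s)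
  have hrs : (0:ℝ) < ((r - s : ℕ) : ℝ) := by exact_mod_cast (by omega : 0 < r - s)
  rw [div_le_div_iff₀ hks hrs]
  have hsplit : (∑ i ∈ Finset.Ico s kk, a i)
      = (∑ i ∈ Finset.Ico s r, a i) + (∑ i ∈ Finset.Ico r kk, a i) :=
    (Finset.sum_Ico_consecutive _ (by omega) hrk).symm
  have h1 : ∀ i ∈ Finset.Ico r kk, ((r - s : ℕ) : ℝ) * a i ≤ (∑ j ∈ Finset.Ico s r, a j) := by
    intro i hi
    rw [Finset.mem_Ico] at hi
    have := Finset.card_nsmul_le_sum (Finset.Ico s r) a (a i) (fun j hj => by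
      rw [Finset.mem_Ico] at hj
      exact hanti j i (by omega) (by omega))
    rwa [Nat.card_Ico, nsmul_eq_mul] at this
  have h2 : ((r - s : ℕ) : ℝ) * (∑ i ∈ Finset.Ico r kk, a i)
      ≤ ((kk - r : ℕ) : ℝ) * (∑ i ∈ Finset.Ico s r, a i) := by
    calc ((r - s : ℕ) : ℝ) * (∑ i ∈ Finset.Ico r kk, a i)
        = ∑ i ∈ Finset.Ico r kk, ((r - s : ℕ) : ℝ) * a i := by rw [← Finset.mul_sum]
      _ ≤ ∑ _i ∈ Finset.Ico r kk, (∑ j ∈ Finset.Ico s r, a j) := Finset.sum_le_sum h1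
      _ = ((kk - r : ℕ) : ℝ) * (∑ j ∈ Finset.Ico s r, a j) := by
          rw [Finset.sum_const, Nat.card_Ico, nsmul_eq_mul]
  have hcast : ((kk - s : ℕ) : ℝ) = ((r - s : ℕ) : ℝ) + ((kk - r : ℕ) : ℝ) := by
    exact_mod_cast congrArg (Nat.cast (R := ℝ)) (by omega : kk - s = (r - s) + (kk - r))
  rw [hsplit, hcast]
  nlinarith [h2]

/-- Generalized Newton–MacLaurin inequality. -/
theorem stmt_1 (n k l r s : ℕ) (hkn : k ≤ n) (hlk : l < k) (hrn : r ≤ n) (hsr : s < r)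
    (hrk : r ≤ k) (hsl : s ≤ l) (lam : Fin n → ℝ) (hlam : lam ∈ GardingCone n k) :
    ((esym n k lam / (n.choose k : ℝ)) / (esym n l lam / (n.choose l : ℝ)))
        ^ ((1 : ℝ) / ((k : ℝ) - (l : ℝ)))
      ≤ ((esym n r lam / (n.choose r : ℝ)) / (esym n s lam / (n.choose s : ℝ)))
        ^ ((1 : ℝ) / ((r : ℝ) - (s : ℝ))) := by
  set p : ℕ → ℝ := fun i => esym n i lam / (n.choose i : ℝ) with hp
  have hppos : ∀ i, i ≤ k → 0 < p i := by
    intro i hik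
    rcases Nat.eq_zero_or_pos i with h0 | h1
    · subst h0
      simp [hp, esym_zero']
    · have hnum := hlam i h1 hik
      have hden : (0:ℝ) < (n.choose i : ℝ) := by
        exact_mod_cast Nat.choose_pos (by omega)
      exact div_pos hnum hden
  set q : ℕ → ℝ := fun i => p (i+1) / p i with hq
  have hqpos : ∀ i, i + 1 ≤ k → 0 < q i :=
    fun i hi => div_pos (hppos _ hi) (hppos _ (by omega))
  -- q is antitone on the relevant range
  have hqstep : ∀ m, m + 2 ≤ k → q (m+1) ≤ q m := by
    intro m hm
    have hnewton := newton_norm (n := n) (m := m) (by omega) lam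
    rw [hq, div_le_div_iff₀ (hppos _ (by omega)) (hppos _ (by omega))]
    calc p (m+1+1) * p m = p m * p (m+2) := by ring_nf
      _ ≤ p (m+1) ^ 2 := hnewton
      _ = p (m+1) * p (m+1) := sq (p (m+1)) ▸ by ring
  have hqanti : ∀ i j, i ≤ j → j + 1 ≤ k → q j ≤ q i := by
    intro i j hij
    induction j, hij using Nat.le_induction with
    | base => exact fun _ => le_rfl
    | succ j hij ih =>
        intro hjk
        exact (hqstep j (by omega)).trans (ih (by omega))
  -- telescoping product
  have htel : ∀ a b, a ≤ b → b ≤ k → (∏ i ∈ Finset.Ico a b, q i) = p b / p a := by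
    intro a b hab
    induction b, hab using Nat.le_induction with
    | base =>
        intro hak
        rw [Finset.Ico_self, Finset.prod_empty, div_self (hppos a hak).ne']
    | succ b hab ih =>
        intro hbk
        rw [Finset.prod_Ico_succ_top hab, ih (by omega)]
        rw [show q b = p (b+1) / p b from rfl, mul_comm,
          div_mul_div_cancel₀ (hppos b (by omega)).ne']
  -- log-sum forms
  have hlog : ∀ a b, a ≤ b → b ≤ k →
      Real.log (p b / p a) = ∑ i ∈ Finset.Ico a b, Real.log (q i) := by
    intro a b hab hbk
    rw [← htel a b hab hbk]
    exact Real.log_prod (fun i hi => by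
      rw [Finset.mem_Ico] at hi
      exact (hqpos i (by omega)).ne')
  -- positivity of ratios
  have hx : 0 < p k / p l := div_pos (hppos k le_rfl) (hppos l (by omega))
  have hy : 0 < p r / p s := div_pos (hppos r (by omega)) (hppos s (by omega))
  show (p k / p l) ^ ((1 : ℝ) / ((k : ℝ) - (l : ℝ)))
      ≤ (p r / p s) ^ ((1 : ℝ) / ((r : ℝ) - (s : ℝ)))
  rw [Real.rpow_def_of_pos hx, Real.rpow_def_of_pos hy, Real.exp_le_exp]
  have hkl : (k : ℝ) - (l : ℝ) = ((k - l : ℕ) : ℝ) := by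
    rw [Nat.cast_sub (by omega)]
  have hrscast : (r : ℝ) - (s : ℝ) = ((r - s : ℕ) : ℝ) := by
    rw [Nat.cast_sub (by omega)]
  rw [hkl, hrscast, mul_one_div, mul_one_div, hlog l k (by omega) le_rfl,
    hlog s r (by omega) (by omega)]
  have hanti : ∀ i j, i ≤ j → j + 1 ≤ k → Real.log (q j) ≤ Real.log (q i) := by
    intro i j hij hjk
    exact Real.log_le_log (hqpos j hjk) (hqanti i j hij hjk)
  exact (avg_left hanti hsl hlk).trans (avg_right hanti hsr hrk)
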